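/- Let p_⟨i⟩ = p(Π∖{α_i}) be a maximal standard parabolic subalgebra and write θ = Σ_i n_i α_i for the highest root. Then the set of ad-nilpotent ideals c with n_g(c) = p_⟨i⟩, partially ordered by inclusion, is a chain, and its cardinality equals n_i. Explicitly, these ideals are the ideals with I_j = {μ ∈ Δ⁺ : [μ:α_i] ≥ j} for j = 1,…,n_i, where [μ:α_i] is the coefficient of α_i in μ. -/

import Mathlib

open scoped RealInnerProductSpace
open scoped Classical

set_option linter.unusedSectionVars false

noncomputable section

/-- Axiomatization of the root system (with a fixed base and positive system) of a
complex simple Lie algebra `g` with Cartan subalgebra `t ⊆ b`: a finite, reduced,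
crystallographic root system, invariant under its reflections, in a euclidean vector
space `V` (the real span of the roots, with a Weyl-group-invariant inner product),
together with the set `Pi` of simple roots and the set `Δpos` of positive roots. -/
structure RootSystemData (V : Type*) [NormedAddCommGroup V] [InnerProductSpace ℝ V]
    [FiniteDimensional ℝ V] where
  /-- the set of all roots -/
  Δ : Finset V
  /-- the set of simple roots -/
  Pi : Finset V
  /-- the set of positive roots -/
  Δpos : Finset V
  zero_not_mem : (0 : V) ∉ Δ
  neg_mem : ∀ ⦃α⦄, α ∈ Δ → -α ∈ Δ
  reflect_mem : ∀ ⦃α⦄, α ∈ Δ → ∀ ⦃β⦄, β ∈ Δ → β - (2 * ⟪β, α⟫ / ⟪α, α⟫) • α ∈ Δ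
  crystallographic : ∀ ⦃α⦄, α ∈ Δ → ∀ ⦃β⦄, β ∈ Δ → ∃ n : ℤ, 2 * ⟪β, α⟫ = n * ⟪α, α⟫
  reduced : ∀ ⦃α⦄, α ∈ Δ → ∀ t : ℝ, t • α ∈ Δ → t = 1 ∨ t = -1
  Pi_subset : Pi ⊆ Δpos
  Pi_indep : LinearIndependent ℝ (Subtype.val : {x : V // x ∈ Pi} → V)
  Pi_span : Submodule.span ℝ (Pi : Set V) = ⊤
  Δpos_subset : Δpos ⊆ Δ
  mem_Δpos_iff : ∀ ⦃γ⦄, γ ∈ Δ →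
    (γ ∈ Δpos ↔ ∃ c : V → ℕ, γ = ∑ α ∈ Pi, (c α : ℝ) • α)
  pos_or_neg : ∀ ⦃γ⦄, γ ∈ Δ → γ ∈ Δpos ∨ -γ ∈ Δpos

variable {V : Type*} [NormedAddCommGroup V] [InnerProductSpace ℝ V] [FiniteDimensional ℝ V]

/-- `θ` is the highest root: `θ ∈ Δ⁺` and `γ ≼ θ` for every positive root `γ`. -/
def RootSystemData.IsHighestRoot (R : RootSystemData V) (θ : V) : Prop :=
  θ ∈ R.Δpos ∧ ∀ γ ∈ R.Δpos, ∃ c : V → ℕ, θ - γ = ∑ α ∈ R.Pi, (c α : ℝ) • α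

/-- An upper ideal of the root poset `(Δ⁺, ≼)`: a subset `I ⊆ Δ⁺` such that if
`γ ∈ I`, `μ ∈ Δ⁺` and `γ + μ` is a root, then `γ + μ ∈ I`.  Upper ideals correspond
bijectively to the ad-nilpotent ideals `c = ⊕_{γ ∈ I} g_γ` of the Borel subalgebra
`b` (the ideals of `b` contained in `u = [b, b]`). -/
def RootSystemData.IsUpperIdeal (R : RootSystemData V) (I : Finset V) : Prop :=
  I ⊆ R.Δpos ∧ ∀ γ ∈ I, ∀ μ ∈ R.Δpos, γ + μ ∈ R.Δ → γ + μ ∈ I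

/-- The weight `|c| = Σ_{γ ∈ I_c} γ` of an ad-nilpotent ideal. -/
def idealWeight {V : Type*} [NormedAddCommGroup V] [InnerProductSpace ℝ V]
    [FiniteDimensional ℝ V] (I : Finset V) : V := ∑ γ ∈ I, γ

/-- The condition `g_{-α} ⊆ n_g(c)` for a simple root `α` and the ad-nilpotent ideal
`c = ⊕_{γ ∈ I} g_γ`.  Since `[g_{-α}, g_γ] = g_{γ-α}` when `γ - α` is a root,
`[g_{-α}, g_α] ⊆ t` and `[g_{-α}, g_γ] = 0` otherwise (and `γ - α ∈ Δ` with
`γ ∈ Δ⁺`, `α` simple forces `γ - α ∈ Δ⁺`), the root space `g_{-α}` normalizes `c`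
if and only if `α ∉ I` and `I` is closed under subtracting `α` inside `Δ`.
(The normalizer `n_g(c)` is the standard parabolic subalgebra generated by `b` and
those `g_{-α}`, `α ∈ Π`, satisfying this condition.) -/
def RootSystemData.NegSimpleRootInNormalizer (R : RootSystemData V) (I : Finset V)
    (α : V) : Prop :=
  α ∉ I ∧ ∀ γ ∈ I, γ - α ∈ R.Δ → γ - α ∈ I

namespace RootSystemData

variable (R : RootSystemData V)

/-- Uniqueness of coefficients in the simple-root basis. -/
lemma coeff_eq {a b : V → ℝ} (h : ∑ α ∈ R.Pi, a α • α = ∑ α ∈ R.Pi, b α • α) :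
    ∀ α ∈ R.Pi, a α = b α := by
  have hsum : ∑ α : {x : V // x ∈ R.Pi}, (a α.1 - b α.1) • α.1 = 0 := by
    rw [Finset.sum_coe_sort R.Pi (fun α => (a α - b α) • α)]
    have : ∑ α ∈ R.Pi, (a α - b α) • α
        = ∑ α ∈ R.Pi, a α • α - ∑ α ∈ R.Pi, b α • α := by
      rw [← Finset.sum_sub_distrib]
      exact Finset.sum_congr rfl fun α _ => sub_smul _ _ _
    rw [this, h, sub_self]
  have := Fintype.linearIndependent_iff.mp R.Pi_indep (fun α => a α.1 - b α.1) hsum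
  intro α hα
  have h2 : a α - b α = 0 := this ⟨α, hα⟩
  linarith

lemma inner_self_pos' {α : V} (hα : α ∈ R.Δ) : 0 < ⟪α, α⟫ := by
  have hα0 : α ≠ 0 := by rintro rfl; exact R.zero_not_mem hα
  have : 0 < ‖α‖ := norm_pos_iff.mpr hα0
  rw [real_inner_self_eq_norm_mul_norm]
  positivity

/-- The key root-string lemma: if `⟪β, α⟫ > 0` and `β ≠ α` then `β - α` is a root. -/
lemma sub_mem_of_inner_pos {α β : V} (hα : α ∈ R.Δ) (hβ : β ∈ R.Δ)
    (hip : 0 < ⟪β, α⟫) (hne : β ≠ α) : β - α ∈ R.Δ := by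
  obtain ⟨n, hn⟩ := R.crystallographic hα hβ
  obtain ⟨m, hm⟩ := R.crystallographic hβ hα
  have haa := R.inner_self_pos' hα
  have hbb := R.inner_self_pos' hβ
  have hn1 : 1 ≤ n := by
    by_contra hc
    push_neg at hc
    have : (n : ℝ) ≤ 0 := by exact_mod_cast Int.lt_add_one_iff.mp (by omega : n < 1)
    nlinarith
  have hm1 : 1 ≤ m := by
    by_contra hc
    push_neg at hc
    have : (m : ℝ) ≤ 0 := by exact_mod_cast Int.lt_add_one_iff.mp (by omega : m < 1)
    rw [real_inner_comm] at hm
    nlinarith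
  -- not collinear
  have hncol : ¬ ∃ r : ℝ, r ≠ 0 ∧ β = r • α := by
    rintro ⟨r, hr0, rfl⟩
    rcases R.reduced hα r hβ with rfl | rfl
    · exact hne (one_smul ℝ α)
    · rw [neg_one_smul, inner_neg_left] at hip; linarith
  -- strict Cauchy–Schwarz
  have hCS : ⟪β, α⟫ * ⟪β, α⟫ < ⟪α, α⟫ * ⟪β, β⟫ := by
    rcases lt_or_eq_of_le (real_inner_mul_inner_self_le α β) with h | h
    · have hc : ⟪β, α⟫ = ⟪α, β⟫ := real_inner_comm α β
      rw [hc]; exact h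
    · exfalso
      have hα0 : α ≠ 0 := by rintro rfl; exact R.zero_not_mem hα
      have hβ0 : β ≠ 0 := by rintro rfl; exact R.zero_not_mem hβ
      have : ‖⟪α, β⟫‖ = ‖α‖ * ‖β‖ := by
        have h1 : ⟪α, β⟫ * ⟪α, β⟫ = (‖α‖ * ‖β‖) * (‖α‖ * ‖β‖) := by
          rw [h, real_inner_self_eq_norm_mul_norm, real_inner_self_eq_norm_mul_norm]; ring
        have h2 : |⟪α, β⟫| = |(‖α‖ * ‖β‖)| := by
          rw [← abs_mul_abs_self ⟪α, β⟫, ← abs_mul_abs_self (‖α‖ * ‖β‖)] at h1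
          nlinarith [abs_nonneg ⟪α, β⟫, abs_nonneg (‖α‖ * ‖β‖)]
        rw [Real.norm_eq_abs, h2, abs_of_nonneg (by positivity)]
      obtain ⟨r, hr0, hr⟩ := (norm_inner_eq_norm_iff hα0 hβ0).mp this
      exact hncol ⟨r, hr0, hr⟩
  -- n * m < 4
  have hnm : n * m < 4 := by
    have h4 : (n : ℝ) * m * (⟪α, α⟫ * ⟪β, β⟫) = 4 * (⟪β, α⟫ * ⟪β, α⟫) := by
      have hc : ⟪α, β⟫ = ⟪β, α⟫ := real_inner_comm β α
      rw [hc] at hm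
      nlinarith [hn, hm]
    have h5 : (n : ℝ) * m < 4 := by nlinarith
    exact_mod_cast h5
  have hcase : n = 1 ∨ m = 1 := by
    by_contra hc
    push_neg at hc
    obtain ⟨hcn, hcm⟩ := hc
    have : 2 ≤ n := by omega
    have : 2 ≤ m := by omega
    nlinarith [hnm]
  rcases hcase with rfl | rfl
  · have := R.reflect_mem hα hβ
    have heq : (2 * ⟪β, α⟫ / ⟪α, α⟫ : ℝ) = 1 := by
      rw [hn]; field_simp; norm_num
    rwa [heq, one_smul] at this
  · have h2 := R.reflect_mem hβ hα
    have heq : (2 * ⟪α, β⟫ / ⟪β, β⟫ : ℝ) = 1 := by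
      rw [hm]; field_simp; norm_num
    rw [heq, one_smul] at h2
    have h3 := R.neg_mem h2
    rwa [neg_sub] at h3

lemma sum_indicator_smul {α : V} (hα : α ∈ R.Pi) :
    ∑ β ∈ R.Pi, (if β = α then (1 : ℝ) else 0) • β = α := by
  have h : ∀ β ∈ R.Pi, (if β = α then (1 : ℝ) else 0) • β = if β = α then β else 0 := by
    intro β _; split <;> simp
  rw [Finset.sum_congr rfl h, Finset.sum_ite_eq' R.Pi α (fun b => b)]
  simp [hα]

lemma inner_sum_smul (d : V → ℝ) (y : V) :
    ⟪∑ α ∈ R.Pi, d α • α, y⟫ = ∑ α ∈ R.Pi, d α * ⟪α, y⟫ := by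
  rw [sum_inner]
  exact Finset.sum_congr rfl fun α _ => real_inner_smul_left α y (d α)

/-- If a root has a positive coefficient in some expansion, it is positive. -/
lemma pos_of_coeff_pos {γ : V} (hγ : γ ∈ R.Δ) (d : V → ℝ)
    (hd : γ = ∑ α ∈ R.Pi, d α • α) {α0 : V} (hα0 : α0 ∈ R.Pi) (hpos : 0 < d α0) :
    γ ∈ R.Δpos := by
  rcases R.pos_or_neg hγ with h | h
  · exact h
  · exfalso
    obtain ⟨c, hc⟩ := (R.mem_Δpos_iff (R.neg_mem hγ)).mp h
    have hzero : ∑ α ∈ R.Pi, (d α + (c α : ℝ)) • α = ∑ α ∈ R.Pi, (0 : ℝ) • α := by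
      have : ∑ α ∈ R.Pi, (d α + (c α : ℝ)) • α
          = ∑ α ∈ R.Pi, d α • α + ∑ α ∈ R.Pi, (c α : ℝ) • α := by
        rw [← Finset.sum_add_distrib]
        exact Finset.sum_congr rfl fun α _ => add_smul _ _ _
      rw [this, ← hd, ← hc]
      simp
    have := R.coeff_eq hzero α0 hα0
    have hc0 : (0 : ℝ) ≤ (c α0 : ℝ) := Nat.cast_nonneg _
    linarith

/-- Coefficients of a simple root. -/
lemma cf_simple (cf : V → V → ℕ)
    (hcf : ∀ γ ∈ R.Δpos, γ = ∑ α ∈ R.Pi, (cf γ α : ℝ) • α)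
    {α : V} (hα : α ∈ R.Pi) {β : V} (hβ : β ∈ R.Pi) :
    cf α β = if β = α then 1 else 0 := by
  have h1 : ∑ b ∈ R.Pi, (cf α b : ℝ) • b
      = ∑ b ∈ R.Pi, (if b = α then (1 : ℝ) else 0) • b := by
    rw [← hcf α (R.Pi_subset hα), R.sum_indicator_smul hα]
  have h2 := R.coeff_eq h1 β hβ
  by_cases h : β = α
  · simp only [if_pos h] at h2 ⊢; exact_mod_cast h2
  · simp only [if_neg h] at h2 ⊢; exact_mod_cast h2

/-- Additivity of coefficients. -/
lemma cf_add (cf : V → V → ℕ)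
    (hcf : ∀ γ ∈ R.Δpos, γ = ∑ α ∈ R.Pi, (cf γ α : ℝ) • α)
    {μ ν : V} (hμ : μ ∈ R.Δpos) (hν : ν ∈ R.Δpos) (hs : μ + ν ∈ R.Δpos) :
    ∀ β ∈ R.Pi, cf (μ + ν) β = cf μ β + cf ν β := by
  have h1 : ∑ β ∈ R.Pi, (cf (μ + ν) β : ℝ) • β
      = ∑ β ∈ R.Pi, ((cf μ β : ℝ) + (cf ν β : ℝ)) • β := by
    rw [← hcf _ hs]
    have h2 : ∑ β ∈ R.Pi, ((cf μ β : ℝ) + (cf ν β : ℝ)) • β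
        = ∑ β ∈ R.Pi, (cf μ β : ℝ) • β + ∑ β ∈ R.Pi, (cf ν β : ℝ) • β := by
      rw [← Finset.sum_add_distrib]
      exact Finset.sum_congr rfl fun β _ => add_smul _ _ _
    rw [h2, ← hcf μ hμ, ← hcf ν hν]
  intro β hβ
  exact_mod_cast R.coeff_eq h1 β hβ

/-- A positive root minus a distinct simple root, if a root, is positive. -/
lemma sub_simple_pos
    {ν α : V} (hν : ν ∈ R.Δpos) (hα : α ∈ R.Pi) (hne : ν ≠ α)
    (hsub : ν - α ∈ R.Δ) : ν - α ∈ R.Δpos := by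
  obtain ⟨cf', hcf'⟩ := (R.mem_Δpos_iff (R.Δpos_subset hν)).mp hν
  set cf : V → V → ℕ := fun _ => cf' with hcfdef
  have hcf : ∀ γ ∈ ({ν} : Finset V), γ = ∑ α ∈ R.Pi, (cf γ α : ℝ) • α := by
    intro γ hγ
    rw [Finset.mem_singleton] at hγ
    subst hγ
    exact hcf'
  rcases R.pos_or_neg hsub with h | h
  · exact h
  · exfalso
    rw [neg_sub] at h
    obtain ⟨e, he⟩ := (R.mem_Δpos_iff (R.Δpos_subset h)).mp h
    -- α = ν + (α - ν) = ∑ (cf ν + e) • β, and α = ∑ indicator • β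
    have h1 : ∑ β ∈ R.Pi, ((cf ν β : ℝ) + (e β : ℝ)) • β
        = ∑ β ∈ R.Pi, (if β = α then (1 : ℝ) else 0) • β := by
      rw [R.sum_indicator_smul hα]
      have h2 : ∑ β ∈ R.Pi, ((cf ν β : ℝ) + (e β : ℝ)) • β
          = ∑ β ∈ R.Pi, (cf ν β : ℝ) • β + ∑ β ∈ R.Pi, (e β : ℝ) • β := by
        rw [← Finset.sum_add_distrib]
        exact Finset.sum_congr rfl fun β _ => add_smul _ _ _
      rw [h2, ← hcf ν (Finset.mem_singleton_self ν), ← he]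
      abel
    have hco := R.coeff_eq h1
    -- so cf ν β = 0 for β ≠ α and cf ν α ≤ 1
    have hν0 : ∀ β ∈ R.Pi, β ≠ α → cf ν β = 0 := by
      intro β hβ hbα
      have := hco β hβ
      simp only [if_neg hbα] at this
      have h3 : (0:ℝ) ≤ (cf ν β : ℝ) := Nat.cast_nonneg _
      have h4 : (0:ℝ) ≤ (e β : ℝ) := Nat.cast_nonneg _
      have : (cf ν β : ℝ) = 0 := by linarith
      exact_mod_cast this
    have hνα : cf ν α ≤ 1 := by
      have h5 := hco α hα
      rw [if_pos rfl] at h5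
      have h4 : (0:ℝ) ≤ (e α : ℝ) := Nat.cast_nonneg _
      have h6 : (cf ν α : ℝ) ≤ 1 := by linarith
      exact_mod_cast h6
    have hνeq : ν = (cf ν α : ℝ) • α := by
      have h7 : ∑ β ∈ R.Pi, (cf ν β : ℝ) • β = (cf ν α : ℝ) • α :=
        Finset.sum_eq_single α (fun β hβ hbα => by rw [hν0 β hβ hbα]; simp)
          (fun hc => absurd hα hc)
      conv_lhs => rw [hcf ν (Finset.mem_singleton_self ν)]
      exact h7
    have hcase : cf ν α = 0 ∨ cf ν α = 1 := by omega
    rcases hcase with h0 | h0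
    · rw [h0] at hνeq
      simp only [Nat.cast_zero, zero_smul] at hνeq
      rw [hνeq] at hν
      exact R.zero_not_mem (R.Δpos_subset hν)
    · rw [h0] at hνeq
      simp only [Nat.cast_one, one_smul] at hνeq
      exact hne hνeq

/-- Every positive root has positive inner product with some simple root. -/
lemma exists_inner_pos {γ : V} (hγ : γ ∈ R.Δpos) : ∃ α ∈ R.Pi, 0 < ⟪γ, α⟫ := by
  by_contra hno
  push_neg at hno
  obtain ⟨c, hc⟩ := (R.mem_Δpos_iff (R.Δpos_subset hγ)).mp hγ
  have h1 : ⟪γ, γ⟫ = ∑ α ∈ R.Pi, (c α : ℝ) * ⟪α, γ⟫ :=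
    calc ⟪γ, γ⟫ = ⟪∑ α ∈ R.Pi, (c α : ℝ) • α, γ⟫ := by rw [← hc]
    _ = ∑ α ∈ R.Pi, (c α : ℝ) * ⟪α, γ⟫ := R.inner_sum_smul _ γ
  have h2 : ⟪γ, γ⟫ ≤ 0 := by
    rw [h1]
    apply Finset.sum_nonpos
    intro α hα
    have := hno α hα
    rw [real_inner_comm] at this
    exact mul_nonpos_of_nonneg_of_nonpos (Nat.cast_nonneg _) this
  linarith [R.inner_self_pos' (R.Δpos_subset hγ)]

/-- A non-simple positive root has a simple root that can be subtracted. -/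
lemma descent
    {γ : V} (hγ : γ ∈ R.Δpos) (hγPi : γ ∉ R.Pi) :
    ∃ α ∈ R.Pi, γ - α ∈ R.Δpos := by
  obtain ⟨α, hα, hip⟩ := R.exists_inner_pos hγ
  have hne : γ ≠ α := fun h => hγPi (h ▸ hα)
  have hsub : γ - α ∈ R.Δ :=
    R.sub_mem_of_inner_pos (R.Δpos_subset (R.Pi_subset hα)) (R.Δpos_subset hγ) hip hne
  exact ⟨α, hα, R.sub_simple_pos hγ hα hne hsub⟩

lemma inner_self_pos_of_ne {x : V} (h : x ≠ 0) : 0 < ⟪x, x⟫ := by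
  have : 0 < ‖x‖ := norm_pos_iff.mpr h
  rw [real_inner_self_eq_norm_mul_norm]
  positivity

lemma sum_add_smul (a b : V → ℝ) :
    ∑ β ∈ R.Pi, (a β + b β) • β = ∑ β ∈ R.Pi, a β • β + ∑ β ∈ R.Pi, b β • β := by
  rw [← Finset.sum_add_distrib]
  exact Finset.sum_congr rfl fun β _ => add_smul _ _ _

lemma sum_smul_decr (c : V → ℕ) {α : V} (hα : α ∈ R.Pi) (h1 : 1 ≤ c α) :
    ∑ β ∈ R.Pi, (((if β = α then c α - 1 else c β : ℕ) : ℝ)) • β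
      = (∑ β ∈ R.Pi, (c β : ℝ) • β) - α := by
  have hcast : ∀ β ∈ R.Pi, (((if β = α then c α - 1 else c β : ℕ) : ℝ)) • β
      = (c β : ℝ) • β - (if β = α then (1 : ℝ) else 0) • β := by
    intro β _
    by_cases h : β = α
    · subst h
      rw [if_pos rfl, if_pos rfl, Nat.cast_sub h1, sub_smul]
      norm_num
    · rw [if_neg h, if_neg h]
      simp
  rw [Finset.sum_congr rfl hcast, Finset.sum_sub_distrib, R.sum_indicator_smul hα]

lemma sum_decr (c : V → ℕ) {α : V} (hα : α ∈ R.Pi) (h1 : 1 ≤ c α) :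
    ∑ β ∈ R.Pi, (if β = α then c α - 1 else c β) + 1 = ∑ β ∈ R.Pi, c β := by
  rw [← Finset.add_sum_erase R.Pi c hα,
    ← Finset.add_sum_erase R.Pi (fun β => if β = α then c α - 1 else c β) hα]
  have h : ∑ β ∈ R.Pi.erase α, (if β = α then c α - 1 else c β)
      = ∑ β ∈ R.Pi.erase α, c β :=
    Finset.sum_congr rfl fun β hβ => by rw [if_neg (Finset.ne_of_mem_erase hβ)]
  rw [h, if_pos rfl]
  omega

lemma sum_natAbs_lt {α : V} (hα : α ∈ R.Pi) (f g : V → ℤ)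
    (hoff : ∀ β ∈ R.Pi, β ≠ α → f β = g β) (hat : (f α).natAbs < (g α).natAbs) :
    ∑ β ∈ R.Pi, (f β).natAbs < ∑ β ∈ R.Pi, (g β).natAbs := by
  rw [← Finset.add_sum_erase R.Pi (fun β => (f β).natAbs) hα,
    ← Finset.add_sum_erase R.Pi (fun β => (g β).natAbs) hα]
  have h : ∑ β ∈ R.Pi.erase α, (f β).natAbs = ∑ β ∈ R.Pi.erase α, (g β).natAbs :=
    Finset.sum_congr rfl fun β hβ => by
      rw [hoff β (Finset.mem_of_mem_erase hβ) (Finset.ne_of_mem_erase hβ)]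
  omega

lemma ne_neg_simple {γ α : V} (hγ : γ ∈ R.Δpos) (hα : α ∈ R.Pi) : γ ≠ -α := by
  intro heq
  obtain ⟨g, hg⟩ := (R.mem_Δpos_iff (R.Δpos_subset hγ)).mp hγ
  have h1 : ∑ β ∈ R.Pi, ((g β : ℝ) + (if β = α then (1 : ℝ) else 0)) • β
      = ∑ β ∈ R.Pi, (0 : ℝ) • β := by
    rw [R.sum_add_smul, ← hg, R.sum_indicator_smul hα]
    rw [heq]
    simp
  have h3 := R.coeff_eq h1 α hα
  rw [if_pos rfl] at h3
  have := Nat.cast_nonneg (α := ℝ) (g α)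
  linarith

lemma add_simple_pos {γ α : V} (hγ : γ ∈ R.Δpos) (hα : α ∈ R.Pi)
    (hadd : γ + α ∈ R.Δ) : γ + α ∈ R.Δpos := by
  apply (R.mem_Δpos_iff hadd).mpr
  obtain ⟨g, hg⟩ := (R.mem_Δpos_iff (R.Δpos_subset hγ)).mp hγ
  refine ⟨fun β => g β + (if β = α then 1 else 0), ?_⟩
  have h1 : ∀ β ∈ R.Pi, ((g β + (if β = α then 1 else 0) : ℕ) : ℝ) • β
      = ((g β : ℝ) + (if β = α then (1 : ℝ) else 0)) • β := by
    intro β _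
    by_cases h : β = α <;> simp [h]
  rw [Finset.sum_congr rfl h1, R.sum_add_smul, ← hg, R.sum_indicator_smul hα]

/-- If `γ` is in an upper ideal and `γ ≼ ν` for a positive root `ν`, then `ν` is
in the ideal. -/
lemma upper_reach {I : Finset V} (hI : R.IsUpperIdeal I) :
    ∀ N : ℕ, ∀ c : V → ℕ, ∀ γ ∈ I, ∀ ν ∈ R.Δpos,
      ν - γ = ∑ α ∈ R.Pi, (c α : ℝ) • α → ∑ α ∈ R.Pi, c α ≤ N → ν ∈ I := by
  intro N
  induction N with
  | zero =>
    intro c γ hγ ν hν hd hs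
    have hall : ∀ α ∈ R.Pi, c α = 0 := by
      intro α hα
      have := Finset.single_le_sum (f := c) (fun i _ => Nat.zero_le _) hα
      omega
    have h0 : ν - γ = 0 := by
      rw [hd]
      apply Finset.sum_eq_zero
      intro α hα
      rw [hall α hα]
      simp
    have : ν = γ := by
      have := sub_eq_zero.mp h0
      exact this
    rwa [this]
  | succ N ih =>
    intro c γ hγ ν hν hd hs
    by_cases hveq : ν = γ
    · rwa [hveq]
    have hγpos : γ ∈ R.Δpos := hI.1 hγ
    have hγΔ : γ ∈ R.Δ := R.Δpos_subset hγpos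
    have hνΔ : ν ∈ R.Δ := R.Δpos_subset hν
    have hself : 0 < ⟪ν - γ, ν - γ⟫ :=
      inner_self_pos_of_ne (sub_ne_zero.mpr hveq)
    have hsplit : 0 < ⟪ν - γ, ν⟫ - ⟪ν - γ, γ⟫ := by
      rw [← inner_sub_right]
      exact hself
    have hinner : ∀ y : V, ⟪ν - γ, y⟫ = ∑ α ∈ R.Pi, (c α : ℝ) * ⟪α, y⟫ := by
      intro y
      rw [hd]
      exact R.inner_sum_smul _ y
    rcases lt_or_ge 0 ⟪ν - γ, ν⟫ with hcase | hcase
    · -- subtract a simple root from ν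
      rw [hinner ν] at hcase
      obtain ⟨α, hα, hterm⟩ : ∃ α ∈ R.Pi, 0 < (c α : ℝ) * ⟪α, ν⟫ := by
        by_contra hno
        push_neg at hno
        linarith [Finset.sum_nonpos hno]
      have hcα : 1 ≤ c α := by
        by_contra h0
        push_neg at h0
        have h1 : c α = 0 := by omega
        rw [h1] at hterm
        simp at hterm
      have hipν : 0 < ⟪ν, α⟫ := by
        have hcomm : ⟪ν, α⟫ = ⟪α, ν⟫ := real_inner_comm α ν
        rw [hcomm]
        by_contra h9
        push_neg at h9
        nlinarith [hterm, (Nat.cast_nonneg (α := ℝ) (c α))]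
      have hνα : ν ≠ α := by
        rintro rfl
        obtain ⟨g, hg⟩ := (R.mem_Δpos_iff hγΔ).mp hγpos
        have h1 : ∑ β ∈ R.Pi, ((g β : ℝ) + (c β : ℝ)) • β
            = ∑ β ∈ R.Pi, (if β = ν then (1 : ℝ) else 0) • β := by
          rw [R.sum_add_smul, ← hg, ← hd, R.sum_indicator_smul hα]
          abel
        have h3 := R.coeff_eq h1 ν hα
        rw [if_pos rfl] at h3
        have h5 : (1 : ℝ) ≤ (c ν : ℝ) := by exact_mod_cast hcα
        have h6 := Nat.cast_nonneg (α := ℝ) (g ν)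
        have h7 : (g ν : ℝ) = 0 := by linarith
        have hgβ : ∀ β ∈ R.Pi, g β = 0 := by
          intro β hβ
          by_cases hb : β = ν
          · subst hb
            exact_mod_cast h7
          · have h8 := R.coeff_eq h1 β hβ
            rw [if_neg hb] at h8
            have h9 := Nat.cast_nonneg (α := ℝ) (g β)
            have h10 := Nat.cast_nonneg (α := ℝ) (c β)
            have : (g β : ℝ) = 0 := by linarith
            exact_mod_cast this
        have hγ0 : γ = 0 := by
          rw [hg]
          apply Finset.sum_eq_zero
          intro β hβ
          rw [hgβ β hβ]
          simp
        rw [hγ0] at hγΔ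
        exact R.zero_not_mem hγΔ
      have hsubΔ : ν - α ∈ R.Δ :=
        R.sub_mem_of_inner_pos (R.Δpos_subset (R.Pi_subset hα)) hνΔ hipν hνα
      have hsubpos : ν - α ∈ R.Δpos := R.sub_simple_pos hν hα hνα hsubΔ
      have hd' : (ν - α) - γ = ∑ β ∈ R.Pi, (((if β = α then c α - 1 else c β : ℕ) : ℝ)) • β := by
        rw [R.sum_smul_decr c hα hcα, ← hd]
        abel
      have hs' : ∑ β ∈ R.Pi, (if β = α then c α - 1 else c β) ≤ N := by
        have := R.sum_decr c hα hcα
        omega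
      have hmem := ih _ γ hγ (ν - α) hsubpos hd' hs'
      have heq : ν - α + α = ν := by abel
      have hfin := hI.2 (ν - α) hmem α (R.Pi_subset hα) (by rw [heq]; exact hνΔ)
      rwa [heq] at hfin
    · -- add a simple root to γ
      have hγc : ⟪ν - γ, γ⟫ < 0 := by linarith
      rw [hinner γ] at hγc
      obtain ⟨α, hα, hterm⟩ : ∃ α ∈ R.Pi, (c α : ℝ) * ⟪α, γ⟫ < 0 := by
        by_contra hno
        push_neg at hno
        linarith [Finset.sum_nonneg hno]
      have hcα : 1 ≤ c α := by
        by_contra h0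
        push_neg at h0
        have h1 : c α = 0 := by omega
        rw [h1] at hterm
        simp at hterm
      have hipγ : ⟪α, γ⟫ < 0 := by
        by_contra h9
        push_neg at h9
        nlinarith [hterm, (Nat.cast_nonneg (α := ℝ) (c α))]
      have hipγ' : 0 < ⟪γ, -α⟫ := by
        rw [inner_neg_right]
        have hcomm : ⟪γ, α⟫ = ⟪α, γ⟫ := real_inner_comm α γ
        linarith
      have haddΔ : γ + α ∈ R.Δ := by
        have := R.sub_mem_of_inner_pos
          (R.neg_mem (R.Δpos_subset (R.Pi_subset hα))) hγΔ hipγ' (R.ne_neg_simple hγpos hα)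
        rwa [sub_neg_eq_add] at this
      have haddpos : γ + α ∈ R.Δpos := R.add_simple_pos hγpos hα haddΔ
      have haddI : γ + α ∈ I := hI.2 γ hγ α (R.Pi_subset hα) haddΔ
      have hd' : ν - (γ + α) = ∑ β ∈ R.Pi, (((if β = α then c α - 1 else c β : ℕ) : ℝ)) • β := by
        rw [R.sum_smul_decr c hα hcα, ← hd]
        abel
      have hs' : ∑ β ∈ R.Pi, (if β = α then c α - 1 else c β) ≤ N := by
        have := R.sum_decr c hα hcα
        omega
      exact ih _ (γ + α) haddI ν hν hd' hs'

/-- Coefficient bound by the highest root. -/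
lemma cf_le_theta (cf : V → V → ℕ)
    (hcf : ∀ γ ∈ R.Δpos, γ = ∑ α ∈ R.Pi, (cf γ α : ℝ) • α)
    {θ : V} (hθ : θ ∈ R.Δpos ∧ ∀ γ ∈ R.Δpos, ∃ c : V → ℕ,
      θ - γ = ∑ α ∈ R.Pi, (c α : ℝ) • α)
    {γ : V} (hγ : γ ∈ R.Δpos) : ∀ β ∈ R.Pi, cf γ β ≤ cf θ β := by
  obtain ⟨c, hc⟩ := hθ.2 γ hγ
  have h1 : ∑ β ∈ R.Pi, (cf θ β : ℝ) • β
      = ∑ β ∈ R.Pi, ((cf γ β : ℝ) + (c β : ℝ)) • β := by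
    rw [R.sum_add_smul, ← hcf γ hγ, ← hc, ← hcf θ hθ.1]
    abel
  intro β hβ
  have h2 := R.coeff_eq h1 β hβ
  have h3 : cf θ β = cf γ β + c β := by exact_mod_cast h2
  omega

/-- Connectivity of levels: two positive roots with the same (positive)
`αi`-coefficient are linked through the ideal moves avoiding `αi`. -/
lemma level_connect (cf : V → V → ℕ)
    (hcf : ∀ γ ∈ R.Δpos, γ = ∑ α ∈ R.Pi, (cf γ α : ℝ) • α)
    {αi : V} (hαi : αi ∈ R.Pi) {I : Finset V} (hI : R.IsUpperIdeal I)
    (hN : ∀ α ∈ R.Pi, α ≠ αi → ∀ γ ∈ I, γ - α ∈ R.Δ → γ - α ∈ I) :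
    ∀ N : ℕ, ∀ μ ν : V, μ ∈ R.Δpos → ν ∈ R.Δpos → cf μ αi = cf ν αi →
      1 ≤ cf μ αi → ν ∈ I →
      ∑ α ∈ R.Pi, ((cf μ α : ℤ) - cf ν α).natAbs ≤ N → μ ∈ I := by
  intro N
  induction N with
  | zero =>
    intro μ ν hμ hν hlev hlev1 hνI hs
    have hall : ∀ α ∈ R.Pi, cf μ α = cf ν α := by
      intro α hα
      have h1 : ((cf μ α : ℤ) - cf ν α).natAbs
          ≤ ∑ α ∈ R.Pi, ((cf μ α : ℤ) - cf ν α).natAbs :=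
        Finset.single_le_sum
          (f := fun α => ((cf μ α : ℤ) - cf ν α).natAbs) (fun i _ => Nat.zero_le _) hα
      have h2 : ((cf μ α : ℤ) - cf ν α).natAbs = 0 := by omega
      have h3 : (cf μ α : ℤ) - cf ν α = 0 := Int.natAbs_eq_zero.mp h2
      omega
    have : μ = ν := by
      rw [hcf μ hμ, hcf ν hν]
      exact Finset.sum_congr rfl fun α hα => by rw [hall α hα]
    rwa [this]
  | succ N ih =>
    intro μ ν hμ hν hlev hlev1 hνI hs
    by_cases hmn : μ = ν
    · rwa [hmn]
    have hμΔ : μ ∈ R.Δ := R.Δpos_subset hμ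
    have hνΔ : ν ∈ R.Δ := R.Δpos_subset hν
    set d : V → ℝ := fun α => (cf μ α : ℝ) - cf ν α with hddef
    have hdiff : μ - ν = ∑ α ∈ R.Pi, d α • α := by
      have h1 : ∑ α ∈ R.Pi, d α • α
          = ∑ α ∈ R.Pi, ((cf μ α : ℝ) • α - (cf ν α : ℝ) • α) :=
        Finset.sum_congr rfl fun α _ => by
          simp only [hddef]
          exact sub_smul _ _ _
      rw [h1, Finset.sum_sub_distrib, ← hcf μ hμ, ← hcf ν hν]
    have hdαi : d αi = 0 := by
      simp only [hddef, hlev, sub_self]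
    have hself : 0 < ⟪μ - ν, μ - ν⟫ := inner_self_pos_of_ne (sub_ne_zero.mpr hmn)
    have hinner : ⟪μ - ν, μ - ν⟫ = ∑ α ∈ R.Pi, d α * ⟪α, μ - ν⟫ := by
      nth_rewrite 1 [hdiff]
      exact R.inner_sum_smul d (μ - ν)
    obtain ⟨α, hαPi, hterm⟩ : ∃ α ∈ R.Pi, 0 < d α * ⟪α, μ - ν⟫ := by
      by_contra hno
      push_neg at hno
      linarith [Finset.sum_nonpos hno, hself, hinner]
    have hααi : α ≠ αi := by
      rintro rfl
      rw [hdαi] at hterm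
      simp at hterm
    have hcfα : ∀ β ∈ R.Pi, cf α β = if β = α then 1 else 0 :=
      fun β hβ => R.cf_simple cf hcf hαPi hβ
    have hcfααi : cf α αi = 0 := by
      rw [hcfα αi hαi, if_neg (Ne.symm hααi)]
    have hsplit : 0 < d α * ⟪α, μ⟫ - d α * ⟪α, ν⟫ := by
      have h2 : ⟪α, μ - ν⟫ = ⟪α, μ⟫ - ⟪α, ν⟫ := by rw [inner_sub_right]
      rw [h2] at hterm
      have h3 := mul_sub (d α) ⟪α, μ⟫ ⟪α, ν⟫
      linarith
    have hdℝ : d α = (cf μ α : ℝ) - cf ν α := by simp only [hddef]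
    rcases lt_or_ge 0 (d α * ⟪α, μ⟫) with hA | hA
    · rcases lt_trichotomy (d α) 0 with hdneg | hdzero | hdpos
      · -- `d α < 0`, `⟪α, μ⟫ < 0` : replace `μ` by `μ + α`
        have hip : ⟪α, μ⟫ < 0 := by nlinarith
        have hcflt : cf μ α < cf ν α := by
          rw [hdℝ] at hdneg
          have h4 : (cf μ α : ℝ) < cf ν α := by linarith
          exact_mod_cast h4
        have hip' : 0 < ⟪μ, -α⟫ := by
          rw [inner_neg_right]
          have hcm : ⟪μ, α⟫ = ⟪α, μ⟫ := real_inner_comm α μ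
          linarith
        have haddΔ : μ + α ∈ R.Δ := by
          have := R.sub_mem_of_inner_pos
            (R.neg_mem (R.Δpos_subset (R.Pi_subset hαPi))) hμΔ hip'
            (R.ne_neg_simple hμ hαPi)
          rwa [sub_neg_eq_add] at this
        have haddpos := R.add_simple_pos hμ hαPi haddΔ
        have hcfadd : ∀ β ∈ R.Pi, cf (μ + α) β = cf μ β + cf α β :=
          R.cf_add cf hcf hμ (R.Pi_subset hαPi) haddpos
        have hlev' : cf (μ + α) αi = cf ν αi := by
          rw [hcfadd αi hαi, hcfααi]
          omega
        have hlev1' : 1 ≤ cf (μ + α) αi := by omega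
        have hmeas : ∑ β ∈ R.Pi, ((cf (μ + α) β : ℤ) - cf ν β).natAbs ≤ N := by
          have hlt := R.sum_natAbs_lt hαPi
            (fun β => (cf (μ + α) β : ℤ) - cf ν β)
            (fun β => (cf μ β : ℤ) - cf ν β)
            (fun β hβ hβα => by beta_reduce; rw [hcfadd β hβ, hcfα β hβ, if_neg hβα]; push_cast; ring)
            (by beta_reduce; rw [hcfadd α hαPi, hcfα α hαPi, if_pos rfl]; push_cast; omega)
          beta_reduce at hlt
          omega
        have hμ'I := ih (μ + α) ν haddpos hν hlev' hlev1' hνI hmeas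
        have heq : μ + α - α = μ := by abel
        have hfin := hN α hαPi hααi (μ + α) hμ'I (by rw [heq]; exact hμΔ)
        rwa [heq] at hfin
      · exfalso
        rw [hdzero] at hA
        simp at hA
      · -- `d α > 0`, `⟪α, μ⟫ > 0` : replace `μ` by `μ - α`
        have hip : 0 < ⟪α, μ⟫ := by nlinarith
        have hcfgt : cf ν α < cf μ α := by
          rw [hdℝ] at hdpos
          have h4 : (cf ν α : ℝ) < cf μ α := by linarith
          exact_mod_cast h4
        have hμα : μ ≠ α := by
          rintro rfl
          have h4 := R.cf_simple cf hcf hαPi hαi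
          rw [if_neg (Ne.symm hααi)] at h4
          omega
        have hipμ : 0 < ⟪μ, α⟫ := by
          have hcm : ⟪μ, α⟫ = ⟪α, μ⟫ := real_inner_comm α μ
          linarith
        have hsubΔ : μ - α ∈ R.Δ :=
          R.sub_mem_of_inner_pos (R.Δpos_subset (R.Pi_subset hαPi)) hμΔ hipμ hμα
        have hsubpos := R.sub_simple_pos hμ hαPi hμα hsubΔ
        have heq : μ - α + α = μ := by abel
        have hcfadd : ∀ β ∈ R.Pi, cf μ β = cf (μ - α) β + cf α β := by
          have h5 := R.cf_add cf hcf hsubpos (R.Pi_subset hαPi) (by rw [heq]; exact hμ)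
          intro β hβ
          have h6 := h5 β hβ
          rw [heq] at h6
          exact h6
        have hlev' : cf (μ - α) αi = cf ν αi := by
          have := hcfadd αi hαi
          omega
        have hlev1' : 1 ≤ cf (μ - α) αi := by omega
        have hmeas : ∑ β ∈ R.Pi, ((cf (μ - α) β : ℤ) - cf ν β).natAbs ≤ N := by
          have hlt := R.sum_natAbs_lt hαPi
            (fun β => (cf (μ - α) β : ℤ) - cf ν β)
            (fun β => (cf μ β : ℤ) - cf ν β)
            (fun β hβ hβα => by
              have h7 := hcfadd β hβ
              rw [hcfα β hβ, if_neg hβα] at h7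
              beta_reduce
              omega)
            (by
              have h7 := hcfadd α hαPi
              rw [hcfα α hαPi, if_pos rfl] at h7
              beta_reduce
              omega)
          beta_reduce at hlt
          omega
        have hμ'I := ih (μ - α) ν hsubpos hν hlev' hlev1' hνI hmeas
        have hfin := hI.2 (μ - α) hμ'I α (R.Pi_subset hαPi) (by rw [heq]; exact hμΔ)
        rwa [heq] at hfin
    · -- move `ν`
      have hB : d α * ⟪α, ν⟫ < 0 := by linarith
      rcases lt_trichotomy (d α) 0 with hdneg | hdzero | hdpos
      · -- `d α < 0`, `⟪α, ν⟫ > 0` : replace `ν` by `ν - α`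
        have hip : 0 < ⟪α, ν⟫ := by nlinarith
        have hcflt : cf μ α < cf ν α := by
          rw [hdℝ] at hdneg
          have h4 : (cf μ α : ℝ) < cf ν α := by linarith
          exact_mod_cast h4
        have hνα : ν ≠ α := by
          rintro rfl
          have h4 := R.cf_simple cf hcf hαPi hαi
          rw [if_neg (Ne.symm hααi)] at h4
          omega
        have hipν : 0 < ⟪ν, α⟫ := by
          have hcm : ⟪ν, α⟫ = ⟪α, ν⟫ := real_inner_comm α ν
          linarith
        have hsubΔ : ν - α ∈ R.Δ :=
          R.sub_mem_of_inner_pos (R.Δpos_subset (R.Pi_subset hαPi)) hνΔ hipν hνα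
        have hsubpos := R.sub_simple_pos hν hαPi hνα hsubΔ
        have heq : ν - α + α = ν := by abel
        have hcfadd : ∀ β ∈ R.Pi, cf ν β = cf (ν - α) β + cf α β := by
          have h5 := R.cf_add cf hcf hsubpos (R.Pi_subset hαPi) (by rw [heq]; exact hν)
          intro β hβ
          have h6 := h5 β hβ
          rw [heq] at h6
          exact h6
        have hlev' : cf μ αi = cf (ν - α) αi := by
          have := hcfadd αi hαi
          omega
        have hν'I : ν - α ∈ I := hN α hαPi hααi ν hνI hsubΔ
        have hmeas : ∑ β ∈ R.Pi, ((cf μ β : ℤ) - cf (ν - α) β).natAbs ≤ N := by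
          have hlt := R.sum_natAbs_lt hαPi
            (fun β => (cf μ β : ℤ) - cf (ν - α) β)
            (fun β => (cf μ β : ℤ) - cf ν β)
            (fun β hβ hβα => by
              have h7 := hcfadd β hβ
              rw [hcfα β hβ, if_neg hβα] at h7
              beta_reduce
              omega)
            (by
              have h7 := hcfadd α hαPi
              rw [hcfα α hαPi, if_pos rfl] at h7
              beta_reduce
              omega)
          beta_reduce at hlt
          omega
        exact ih μ (ν - α) hμ hsubpos hlev' hlev1 hν'I hmeas
      · exfalso
        rw [hdzero] at hB
        simp at hB
      · -- `d α > 0`, `⟪α, ν⟫ < 0` : replace `ν` by `ν + α`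
        have hip : ⟪α, ν⟫ < 0 := by nlinarith
        have hcfgt : cf ν α < cf μ α := by
          rw [hdℝ] at hdpos
          have h4 : (cf ν α : ℝ) < cf μ α := by linarith
          exact_mod_cast h4
        have hip' : 0 < ⟪ν, -α⟫ := by
          rw [inner_neg_right]
          have hcm : ⟪ν, α⟫ = ⟪α, ν⟫ := real_inner_comm α ν
          linarith
        have haddΔ : ν + α ∈ R.Δ := by
          have := R.sub_mem_of_inner_pos
            (R.neg_mem (R.Δpos_subset (R.Pi_subset hαPi))) hνΔ hip'
            (R.ne_neg_simple hν hαPi)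
          rwa [sub_neg_eq_add] at this
        have haddpos := R.add_simple_pos hν hαPi haddΔ
        have hcfadd : ∀ β ∈ R.Pi, cf (ν + α) β = cf ν β + cf α β :=
          R.cf_add cf hcf hν (R.Pi_subset hαPi) haddpos
        have hlev' : cf μ αi = cf (ν + α) αi := by
          rw [hcfadd αi hαi, hcfααi]
          omega
        have hν'I : ν + α ∈ I := hI.2 ν hνI α (R.Pi_subset hαPi) haddΔ
        have hmeas : ∑ β ∈ R.Pi, ((cf μ β : ℤ) - cf (ν + α) β).natAbs ≤ N := by
          have hlt := R.sum_natAbs_lt hαPi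
            (fun β => (cf μ β : ℤ) - cf (ν + α) β)
            (fun β => (cf μ β : ℤ) - cf ν β)
            (fun β hβ hβα => by beta_reduce; rw [hcfadd β hβ, hcfα β hβ, if_neg hβα]; push_cast; ring)
            (by beta_reduce; rw [hcfadd α hαPi, hcfα α hαPi, if_pos rfl]; push_cast; omega)
          beta_reduce at hlt
          omega
        exact ih μ (ν + α) hμ haddpos hlev' hlev1 hν'I hmeas

/-- At any level `k ≥ 2` there is a root `μ` with `μ - αi` a positive root. -/
lemma nogap (cf : V → V → ℕ)
    (hcf : ∀ γ ∈ R.Δpos, γ = ∑ α ∈ R.Pi, (cf γ α : ℝ) • α)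
    {αi : V} (hαi : αi ∈ R.Pi) (k : ℕ) (hk : 2 ≤ k)
    (hex : ∃ μ ∈ R.Δpos, cf μ αi = k) :
    ∃ μ ∈ R.Δpos, cf μ αi = k ∧ μ - αi ∈ R.Δpos ∧ cf (μ - αi) αi = k - 1 := by
  obtain ⟨μ0, hμ0, hcfμ0⟩ := hex
  set S := R.Δpos.filter (fun μ => cf μ αi = k) with hS
  have hSne : S.Nonempty := ⟨μ0, Finset.mem_filter.mpr ⟨hμ0, hcfμ0⟩⟩
  obtain ⟨μ, hμS, hmin⟩ := S.exists_min_image (fun μ => ∑ β ∈ R.Pi, cf μ β) hSne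
  obtain ⟨hμpos, hcfk⟩ := Finset.mem_filter.mp hμS
  have hμnotPi : μ ∉ R.Pi := by
    intro h
    have h1 := R.cf_simple cf hcf h hαi
    have : cf μ αi ≤ 1 := by
      rw [h1]
      split <;> omega
    omega
  obtain ⟨α, hαPi, hsubpos⟩ := R.descent hμpos hμnotPi
  have heq : μ - α + α = μ := by abel
  have hcfadd : ∀ β ∈ R.Pi, cf μ β = cf (μ - α) β + cf α β := by
    have h5 := R.cf_add cf hcf hsubpos (R.Pi_subset hαPi) (by rw [heq]; exact hμpos)
    intro β hβ
    have h6 := h5 β hβ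
    rw [heq] at h6
    exact h6
  by_cases hα : α = αi
  · subst hα
    refine ⟨μ, hμpos, hcfk, hsubpos, ?_⟩
    have h7 := hcfadd α hαPi
    have h8 := R.cf_simple cf hcf hαPi hαPi
    rw [if_pos rfl] at h8
    omega
  · exfalso
    have hcfsub : cf (μ - α) αi = k := by
      have h7 := hcfadd αi hαi
      have h8 := R.cf_simple cf hcf hαPi hαi
      rw [if_neg (fun h => hα h.symm)] at h8
      omega
    have hmem : μ - α ∈ S := Finset.mem_filter.mpr ⟨hsubpos, hcfsub⟩
    have hle := hmin (μ - α) hmem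
    have hlt : ∑ β ∈ R.Pi, cf (μ - α) β < ∑ β ∈ R.Pi, cf μ β := by
      apply Finset.sum_lt_sum
      · intro β hβ
        have := hcfadd β hβ
        omega
      · refine ⟨α, hαPi, ?_⟩
        have h7 := hcfadd α hαPi
        have h8 := R.cf_simple cf hcf hαPi hαPi
        rw [if_pos rfl] at h8
        omega
    omega

/-- Every level `1 ≤ k ≤ n_i` is attained. -/
lemma exists_level (cf : V → V → ℕ)
    (hcf : ∀ γ ∈ R.Δpos, γ = ∑ α ∈ R.Pi, (cf γ α : ℝ) • α)
    {αi : V} (hαi : αi ∈ R.Pi) {θ : V} (hθpos : θ ∈ R.Δpos) :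
    ∀ t k : ℕ, 1 ≤ k → k + t = cf θ αi → ∃ μ ∈ R.Δpos, cf μ αi = k := by
  intro t
  induction t with
  | zero =>
    intro k hk1 hk2
    exact ⟨θ, hθpos, by omega⟩
  | succ t ih =>
    intro k hk1 hk2
    obtain ⟨μ, hμ, hcfμ⟩ := ih (k + 1) (by omega) (by omega)
    obtain ⟨μ', hμ', _, hsub, hcfsub⟩ :=
      R.nogap cf hcf hαi (k + 1) (by omega) ⟨μ, hμ, hcfμ⟩
    exact ⟨μ' - αi, hsub, by omega⟩

lemma add_pos_pos {γ μ : V} (hγ : γ ∈ R.Δpos) (hμ : μ ∈ R.Δpos)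
    (h : γ + μ ∈ R.Δ) : γ + μ ∈ R.Δpos := by
  apply (R.mem_Δpos_iff h).mpr
  obtain ⟨a, ha⟩ := (R.mem_Δpos_iff (R.Δpos_subset hγ)).mp hγ
  obtain ⟨b, hb⟩ := (R.mem_Δpos_iff (R.Δpos_subset hμ)).mp hμ
  refine ⟨fun β => a β + b β, ?_⟩
  have h1 : ∀ β ∈ R.Pi, ((a β + b β : ℕ) : ℝ) • β = ((a β : ℝ) + (b β : ℝ)) • β := by
    intro β _
    push_cast
    ring_nf
  rw [Finset.sum_congr rfl h1, R.sum_add_smul, ← ha, ← hb]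

/-- The ideal `I_j` lies in the fibre over the maximal parabolic `p_⟨i⟩`. -/
lemma filter_is_fibre (cf : V → V → ℕ)
    (hcf : ∀ γ ∈ R.Δpos, γ = ∑ α ∈ R.Pi, (cf γ α : ℝ) • α)
    {αi : V} (hαi : αi ∈ R.Pi) {θ : V}
    (hθ : θ ∈ R.Δpos ∧ ∀ γ ∈ R.Δpos, ∃ c : V → ℕ,
      θ - γ = ∑ α ∈ R.Pi, (c α : ℝ) • α)
    (j : ℕ) (hj1 : 1 ≤ j) (hjn : j ≤ cf θ αi) :
    R.IsUpperIdeal (R.Δpos.filter fun μ => j ≤ cf μ αi) ∧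
      ∀ α ∈ R.Pi,
        (R.NegSimpleRootInNormalizer (R.Δpos.filter fun μ => j ≤ cf μ αi) α ↔ α ≠ αi) := by
  constructor
  · constructor
    · exact Finset.filter_subset _ _
    · intro γ hγ μ hμ hadd
      obtain ⟨hγpos, hγj⟩ := Finset.mem_filter.mp hγ
      have haddpos : γ + μ ∈ R.Δpos := R.add_pos_pos hγpos hμ hadd
      refine Finset.mem_filter.mpr ⟨haddpos, ?_⟩
      have := R.cf_add cf hcf hγpos hμ haddpos αi hαi
      omega
  · intro α hαPi
    constructor
    · -- if `g_{-α}` normalizes then `α ≠ αi`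
      rintro ⟨hnotmem, hclosed⟩ rfl
      by_cases hj : j = 1
      · apply hnotmem
        refine Finset.mem_filter.mpr ⟨R.Pi_subset hαPi, ?_⟩
        have h1 := R.cf_simple cf hcf hαPi hαPi
        rw [if_pos rfl] at h1
        omega
      · obtain ⟨μ, hμ, hcfμ⟩ :=
          R.exists_level cf hcf hαPi hθ.1 (cf θ α - j) j hj1 (by omega)
        obtain ⟨μ', hμ', hcfμ', hsub, hcfsub⟩ :=
          R.nogap cf hcf hαPi j (by omega) ⟨μ, hμ, hcfμ⟩
        have hmem : μ' ∈ R.Δpos.filter fun μ => j ≤ cf μ α :=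
          Finset.mem_filter.mpr ⟨hμ', by omega⟩
        have := hclosed μ' hmem (R.Δpos_subset hsub)
        have := (Finset.mem_filter.mp this).2
        omega
    · -- if `α ≠ αi` then `g_{-α}` normalizes
      intro hne
      have hcfααi : cf α αi = 0 := by
        have h1 := R.cf_simple cf hcf hαPi hαi
        rw [if_neg (Ne.symm hne)] at h1
        exact h1
      constructor
      · intro hmem
        have := (Finset.mem_filter.mp hmem).2
        omega
      · intro γ hγ hsubΔ
        obtain ⟨hγpos, hγj⟩ := Finset.mem_filter.mp hγ
        have hγα : γ ≠ α := by
          rintro rfl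
          have h1 := R.cf_simple cf hcf hαPi hαi
          rw [if_neg (Ne.symm hne)] at h1
          omega
        have hsubpos : γ - α ∈ R.Δpos := R.sub_simple_pos hγpos hαPi hγα hsubΔ
        have heq : γ - α + α = γ := by abel
        have hcfadd := R.cf_add cf hcf hsubpos (R.Pi_subset hαPi)
          (by rw [heq]; exact hγpos) αi hαi
        rw [heq] at hcfadd
        exact Finset.mem_filter.mpr ⟨hsubpos, by omega⟩

/-- Any ideal in the fibre over the maximal parabolic `p_⟨i⟩` equals some `I_j`. -/
lemma fibre_eq_filter (cf : V → V → ℕ)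
    (hcf : ∀ γ ∈ R.Δpos, γ = ∑ α ∈ R.Pi, (cf γ α : ℝ) • α)
    {αi : V} (hαi : αi ∈ R.Pi) {θ : V}
    (hθ : θ ∈ R.Δpos ∧ ∀ γ ∈ R.Δpos, ∃ c : V → ℕ,
      θ - γ = ∑ α ∈ R.Pi, (c α : ℝ) • α)
    {I : Finset V} (hI : R.IsUpperIdeal I)
    (hnorm : ∀ α ∈ R.Pi, (R.NegSimpleRootInNormalizer I α ↔ α ≠ αi)) :
    ∃ j : ℕ, 1 ≤ j ∧ j ≤ cf θ αi ∧ I = R.Δpos.filter fun μ => j ≤ cf μ αi := by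
  have hN : ∀ α ∈ R.Pi, α ≠ αi → ∀ γ ∈ I, γ - α ∈ R.Δ → γ - α ∈ I :=
    fun α hα hne γ hγ hsub => ((hnorm α hα).mpr hne).2 γ hγ hsub
  -- `I` is nonempty
  have hne : I.Nonempty := by
    by_contra h
    rw [Finset.not_nonempty_iff_eq_empty] at h
    subst h
    have : R.NegSimpleRootInNormalizer (∅ : Finset V) αi :=
      ⟨Finset.notMem_empty αi, fun γ hγ _ => absurd hγ (Finset.notMem_empty γ)⟩
    exact ((hnorm αi hαi).mp this) rfl
  -- every element of `I` has level at least 1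
  have hlev1 : ∀ γ ∈ I, 1 ≤ cf γ αi := by
    have key : ∀ n : ℕ, ∀ γ ∈ I, (∑ β ∈ R.Pi, cf γ β) ≤ n → 1 ≤ cf γ αi := by
      intro n
      induction n with
      | zero =>
        intro γ hγ hht
        exfalso
        have hγpos : γ ∈ R.Δpos := hI.1 hγ
        have hall : ∀ β ∈ R.Pi, cf γ β = 0 := by
          intro β hβ
          have := Finset.single_le_sum (f := cf γ)
            (fun i _ => Nat.zero_le _) hβ
          omega
        have : γ = 0 := by
          rw [hcf γ hγpos]
          apply Finset.sum_eq_zero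
          intro β hβ
          rw [hall β hβ]
          simp
        rw [this] at hγpos
        exact R.zero_not_mem (R.Δpos_subset hγpos)
      | succ n ih =>
        intro γ hγ hht
        by_contra h0
        push_neg at h0
        have h0' : cf γ αi = 0 := by omega
        have hγpos : γ ∈ R.Δpos := hI.1 hγ
        by_cases hγPi : γ ∈ R.Pi
        · have hγαi : γ ≠ αi := by
            rintro rfl
            have h1 := R.cf_simple cf hcf hγPi hαi
            rw [if_pos rfl] at h1
            omega
          exact ((hnorm γ hγPi).mpr hγαi).1 hγ
        · obtain ⟨α, hαPi, hsubpos⟩ := R.descent hγpos hγPi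
          have heq : γ - α + α = γ := by abel
          have hcfadd : ∀ β ∈ R.Pi, cf γ β = cf (γ - α) β + cf α β := by
            have h5 := R.cf_add cf hcf hsubpos (R.Pi_subset hαPi)
              (by rw [heq]; exact hγpos)
            intro β hβ
            have h6 := h5 β hβ
            rw [heq] at h6
            exact h6
          have hααi : α ≠ αi := by
            intro heq
            have h1 := R.cf_simple cf hcf hαPi hαi
            rw [if_pos heq.symm] at h1
            have h2 := hcfadd αi hαi
            omega
          have hsubI : γ - α ∈ I := hN α hαPi hααi γ hγ (R.Δpos_subset hsubpos)
          have hht' : ∑ β ∈ R.Pi, cf (γ - α) β ≤ n := by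
            have hlt : ∑ β ∈ R.Pi, cf (γ - α) β < ∑ β ∈ R.Pi, cf γ β := by
              apply Finset.sum_lt_sum
              · intro β hβ
                have := hcfadd β hβ
                omega
              · refine ⟨α, hαPi, ?_⟩
                have h7 := hcfadd α hαPi
                have h8 := R.cf_simple cf hcf hαPi hαPi
                rw [if_pos rfl] at h8
                omega
            omega
          have := ih (γ - α) hsubI hht'
          have := hcfadd αi hαi
          omega
    intro γ hγ
    exact key (∑ β ∈ R.Pi, cf γ β) γ hγ le_rfl
  -- the minimal level
  have hmne : (I.image fun γ => cf γ αi).Nonempty := hne.image _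
  obtain ⟨γmin, hγmin, hγminj⟩ :=
    Finset.mem_image.mp ((I.image fun γ => cf γ αi).min'_mem hmne)
  set j := cf γmin αi with hjdef
  have hj1 : 1 ≤ j := hlev1 γmin hγmin
  have hjn : j ≤ cf θ αi := R.cf_le_theta cf hcf hθ (hI.1 hγmin) αi hαi
  refine ⟨j, hj1, hjn, ?_⟩
  apply Finset.Subset.antisymm
  · intro γ hγ
    refine Finset.mem_filter.mpr ⟨hI.1 hγ, ?_⟩
    have h1 := Finset.min'_le _ _ (Finset.mem_image_of_mem (fun γ => cf γ αi) hγ)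
    rw [hγminj]
    exact h1
  · -- `I_j ⊆ I`
    have key2 : ∀ t : ℕ, ∀ μ ∈ R.Δpos, cf μ αi = j + t → μ ∈ I := by
      intro t
      induction t with
      | zero =>
        intro μ hμ hcfμ
        exact R.level_connect cf hcf hαi hI hN
          (∑ α ∈ R.Pi, ((cf μ α : ℤ) - cf γmin α).natAbs) μ γmin hμ (hI.1 hγmin)
          (by omega) (by omega) hγmin le_rfl
      | succ t ih =>
        intro μ hμ hcfμ
        obtain ⟨μ', hμ', hcfμ', hsub, hcfsub⟩ :=
          R.nogap cf hcf hαi (j + t + 1) (by omega) ⟨μ, hμ, by omega⟩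
        have hsubI : μ' - αi ∈ I := ih (μ' - αi) hsub (by omega)
        have heq : μ' - αi + αi = μ' := by abel
        have hμ'I : μ' ∈ I := by
          have := hI.2 (μ' - αi) hsubI αi (R.Pi_subset hαi)
            (by rw [heq]; exact R.Δpos_subset hμ')
          rwa [heq] at this
        exact R.level_connect cf hcf hαi hI hN
          (∑ α ∈ R.Pi, ((cf μ α : ℤ) - cf μ' α).natAbs) μ μ' hμ hμ'
          (by omega) (by omega) hμ'I le_rfl
    intro μ hμ
    obtain ⟨hμpos, hμj⟩ := Finset.mem_filter.mp hμ
    exact key2 (cf μ αi - j) μ hμpos (by omega)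

end RootSystemData

/-- Lemma 3.4.  Let `p_⟨i⟩ = p(Π \\ {α_i})` be a maximal standard
parabolic subalgebra and `θ = Σ n_j α_j` the highest root.  The set of ad-nilpotent
ideals whose normalizer equals `p_⟨i⟩` (i.e. `g_{-α} ⊆ n_g(c)` exactly for the
simple roots `α ≠ α_i`), partially ordered by inclusion, is a chain of cardinality
`n_i`; explicitly, it consists of the ideals `I_j = {μ ∈ Δ⁺ : [μ : α_i] ≥ j}` for
`j = 1, …, n_i`.  Here `cf γ` gives the coordinates of a positive root `γ` in the
basis `Π` and `nc = cf θ` those of `θ`. -/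
theorem fibre_over_maximal_parabolic_is_chain
    {V : Type*} [NormedAddCommGroup V] [InnerProductSpace ℝ V] [FiniteDimensional ℝ V]
    (R : RootSystemData V) (θ : V) (hθ : R.IsHighestRoot θ)
    (αi : V) (hαi : αi ∈ R.Pi)
    (cf : V → V → ℕ) (hcf : ∀ γ ∈ R.Δpos, γ = ∑ α ∈ R.Pi, (cf γ α : ℝ) • α) :
    IsChain (· ⊆ ·)
      {I : Finset V | R.IsUpperIdeal I ∧
        ∀ α ∈ R.Pi, (R.NegSimpleRootInNormalizer I α ↔ α ≠ αi)} ∧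
    {I : Finset V | R.IsUpperIdeal I ∧
        ∀ α ∈ R.Pi, (R.NegSimpleRootInNormalizer I α ↔ α ≠ αi)}.ncard = cf θ αi ∧
    {I : Finset V | R.IsUpperIdeal I ∧
        ∀ α ∈ R.Pi, (R.NegSimpleRootInNormalizer I α ↔ α ≠ αi)} =
      {J : Finset V | ∃ j : ℕ, 1 ≤ j ∧ j ≤ cf θ αi ∧
        J = R.Δpos.filter fun μ => j ≤ cf μ αi} := by
  obtain ⟨hθ1, hθ2⟩ := hθ
  have hθp : θ ∈ R.Δpos ∧ ∀ γ ∈ R.Δpos, ∃ c : V → ℕ,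
      θ - γ = ∑ α ∈ R.Pi, (c α : ℝ) • α := ⟨hθ1, hθ2⟩
  have hset : {I : Finset V | R.IsUpperIdeal I ∧
        ∀ α ∈ R.Pi, (R.NegSimpleRootInNormalizer I α ↔ α ≠ αi)} =
      {J : Finset V | ∃ j : ℕ, 1 ≤ j ∧ j ≤ cf θ αi ∧
        J = R.Δpos.filter fun μ => j ≤ cf μ αi} := by
    ext J
    constructor
    · rintro ⟨hI, hnorm⟩
      exact R.fibre_eq_filter cf hcf hαi hθp hI hnorm
    · rintro ⟨j, hj1, hjn, rfl⟩
      exact R.filter_is_fibre cf hcf hαi hθp j hj1 hjn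
  refine ⟨?_, ?_, hset⟩
  · -- the fibre is a chain
    intro a ha b hb hab
    rw [hset] at ha hb
    obtain ⟨ja, hja1, hjan, rfl⟩ := ha
    obtain ⟨jb, hjb1, hjbn, rfl⟩ := hb
    rcases le_total ja jb with h | h
    · right
      intro x hx
      obtain ⟨hx1, hx2⟩ := Finset.mem_filter.mp hx
      exact Finset.mem_filter.mpr ⟨hx1, by omega⟩
    · left
      intro x hx
      obtain ⟨hx1, hx2⟩ := Finset.mem_filter.mp hx
      exact Finset.mem_filter.mpr ⟨hx1, by omega⟩
  · -- cardinality
    have haux : ∀ a b : ℕ, 1 ≤ a → a ≤ cf θ αi → a < b →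
        (R.Δpos.filter fun μ => a ≤ cf μ αi) = (R.Δpos.filter fun μ => b ≤ cf μ αi) →
        False := by
      intro a b ha1 han hab hfeq
      obtain ⟨μ, hμ, hcfμ⟩ := R.exists_level cf hcf hαi hθ1 (cf θ αi - a) a ha1 (by omega)
      have hmem : μ ∈ R.Δpos.filter fun μ => a ≤ cf μ αi :=
        Finset.mem_filter.mpr ⟨hμ, by omega⟩
      rw [hfeq] at hmem
      have := (Finset.mem_filter.mp hmem).2
      omega
    have hinj : Set.InjOn (fun j => R.Δpos.filter fun μ => j ≤ cf μ αi)
        ((Finset.Icc 1 (cf θ αi) : Finset ℕ) : Set ℕ) := by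
      intro j1 h1 j2 h2 heq
      simp only [Finset.coe_Icc, Set.mem_Icc] at h1 h2
      by_contra hne12
      rcases Nat.lt_or_ge j1 j2 with h | h
      · exact haux j1 j2 h1.1 h1.2 h heq
      · exact haux j2 j1 h2.1 h2.2 (by omega) heq.symm
    have himg : {I : Finset V | R.IsUpperIdeal I ∧
        ∀ α ∈ R.Pi, (R.NegSimpleRootInNormalizer I α ↔ α ≠ αi)} =
        (fun j => R.Δpos.filter fun μ => j ≤ cf μ αi) ''
          ((Finset.Icc 1 (cf θ αi) : Finset ℕ) : Set ℕ) := by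
      rw [hset]
      ext J
      constructor
      · rintro ⟨j, h1, h2, rfl⟩
        exact ⟨j, by simp [Finset.mem_Icc]; omega, rfl⟩
      · rintro ⟨j, hj, rfl⟩
        simp only [Finset.coe_Icc, Set.mem_Icc] at hj
        exact ⟨j, hj.1, hj.2, rfl⟩
    rw [himg, Set.ncard_image_of_injOn hinj, Set.ncard_coe_finset, Nat.card_Icc]
    omega

end
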